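/- Let τ belong to class 𝒯 and suppose x = 0 is not a limit point of the left partition endpoints {a_i}, with τ'(0) = 1/α > 1. Then for every n ≥ 1, x = 0 is not a limit point of the left endpoints {a_i^{(n)}} of the partition 𝒫^{(n)} for τ^n, and (τ^n)'(0) = 1/α^n > 1. -/

import Mathlib

open Set Filter MeasureTheory Topology

structure PCT where
  τ : ℝ → ℝ
  a : ℕ → ℝ
  b : ℕ → ℝ
  da : ℕ → ℝ
  maps_to : Set.MapsTo τ (Set.Icc 0 1) (Set.Icc 0 1)
  lt : ∀ i, a i < b i
  sub : ∀ i, Set.Ioo (a i) (b i) ⊆ Set.Icc (0:ℝ) 1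
  disj : Pairwise (Function.onFun Disjoint fun i => Set.Ioo (a i) (b i))
  null : volume (Set.Icc (0:ℝ) 1 \ ⋃ i, Set.Ioo (a i) (b i)) = 0
  mono : ∀ i, StrictMonoOn τ (Set.Ioo (a i) (b i))
  conv : ∀ i, ConvexOn ℝ (Set.Ioo (a i) (b i)) τ
  diff : ∀ i, ∀ x ∈ Set.Ioo (a i) (b i), DifferentiableAt ℝ τ x
  lim_zero : ∀ i, Filter.Tendsto τ (nhdsWithin (a i) (Set.Ioi (a i))) (nhds 0)
  deriv_lim : ∀ i, Filter.Tendsto (deriv τ) (nhdsWithin (a i) (Set.Ioi (a i))) (nhds (da i))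
  da_pos : ∀ i, 0 < da i
  sum_inv : Summable (fun i => 1 / da i)
  expand : (¬ AccPt (0:ℝ) (Filter.principal (Set.range a))) → ∃ i, a i = 0 ∧ 1 < da i

/-- The interval `(c,d)` follows a single sequence of branches under the first `n`
iterates of `τ`. -/
def IsBranchSeq (T : PCT) (n : ℕ) (c d : ℝ) : Prop :=
  c < d ∧ ∀ k < n, ∃ i, T.τ^[k] '' Set.Ioo c d ⊆ Set.Ioo (T.a i) (T.b i)

/-- `(c,d)` is a maximal open interval on which `τ^n` is a single monotone branch,
i.e. an element of the partition `𝒫⁽ⁿ⁾`. -/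
def IsBranchInterval (T : PCT) (n : ℕ) (c d : ℝ) : Prop :=
  IsBranchSeq T n c d ∧
    ∀ c' d', c' ≤ c → d ≤ d' → IsBranchSeq T n c' d' → c' = c ∧ d' = d

/-- positivity of τ on a branch -/
lemma tau_pos (T : PCT) (i : ℕ) {x : ℝ} (hx : x ∈ Set.Ioo (T.a i) (T.b i)) :
    0 < T.τ x := by
  obtain ⟨h1, h2⟩ := hx
  set y := (T.a i + x) / 2 with hy
  have hay : T.a i < y := by simp [hy]; linarith
  have hyx : y < x := by simp [hy]; linarith
  have hymem : y ∈ Set.Ioo (T.a i) (T.b i) := ⟨hay, by linarith⟩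
  have h0y : 0 ≤ T.τ y := by
    refine le_of_tendsto (T.lim_zero i) ?_
    filter_upwards [Ioo_mem_nhdsGT_of_mem ⟨le_refl _, hay⟩] with z hz
    exact (T.mono i ⟨hz.1, lt_trans hz.2 (by linarith)⟩ hymem hz.2).le
  exact lt_of_le_of_lt h0y (T.mono i hymem ⟨h1, h2⟩ hyx)

/-- small neighborhoods map into any prescribed (0,ε) -/
lemma tauSmallImage (T : PCT) (i₀ : ℕ) (hi₀ : T.a i₀ = 0) {ε : ℝ} (hε : 0 < ε) :
    ∃ η : ℝ, 0 < η ∧ η ≤ T.b i₀ ∧ ∀ x ∈ Set.Ioo (0:ℝ) η, T.τ x ∈ Set.Ioo 0 ε := by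
  have hlim : Filter.Tendsto T.τ (nhdsWithin 0 (Set.Ioi 0)) (nhds 0) := by
    have := T.lim_zero i₀; rwa [hi₀] at this
  have hev : ∀ᶠ x in nhdsWithin (0:ℝ) (Set.Ioi 0), T.τ x < ε :=
    hlim.eventually (Filter.Tendsto.eventually_lt_const hε tendsto_id)
  rw [eventually_nhdsWithin_iff] at hev
  obtain ⟨η₀, hη₀, hsub⟩ := Metric.eventually_nhds_iff.mp hev
  refine ⟨min η₀ (T.b i₀), lt_min hη₀ (hi₀ ▸ T.lt i₀), min_le_right _ _, ?_⟩
  intro x hx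
  have hxb : x ∈ Set.Ioo (T.a i₀) (T.b i₀) :=
    ⟨hi₀ ▸ hx.1, lt_of_lt_of_le hx.2 (min_le_right _ _)⟩
  have hlt : T.τ x < ε := by
    apply hsub (show dist x 0 < η₀ by
      rw [Real.dist_eq, sub_zero, abs_of_pos hx.1]
      exact lt_of_lt_of_le hx.2 (min_le_left _ _)) hx.1
  exact ⟨tau_pos T i₀ hxb, hlt⟩

/-- existence of a δ so that all iterates up to n stay in the branch at 0 -/
lemma exists_delta (T : PCT) (i₀ : ℕ) (hi₀ : T.a i₀ = 0) (n : ℕ) :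
    ∃ δ : ℝ, 0 < δ ∧ δ ≤ T.b i₀ ∧
      ∀ k < n, ∀ x ∈ Set.Ioo (0:ℝ) δ, T.τ^[k] x ∈ Set.Ioo 0 (T.b i₀) := by
  induction n with
  | zero => exact ⟨T.b i₀, hi₀ ▸ T.lt i₀, le_refl _, fun k hk => absurd hk (Nat.not_lt_zero k)⟩
  | succ n ih =>
    obtain ⟨δ', hδ'0, hδ'b, hδ'⟩ := ih
    obtain ⟨η, hη0, hηb, hη⟩ := tauSmallImage T i₀ hi₀ hδ'0
    refine ⟨min η δ', lt_min hη0 hδ'0, le_trans (min_le_left _ _) hηb, ?_⟩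
    intro k hk x hx
    match k with
    | 0 =>
      simpa using ⟨hx.1, lt_of_lt_of_le hx.2 (le_trans (min_le_left _ _) hηb)⟩
    | (j+1) =>
      rw [Function.iterate_succ_apply]
      have hτx : T.τ x ∈ Set.Ioo (0:ℝ) δ' :=
        hη x ⟨hx.1, lt_of_lt_of_le hx.2 (min_le_left _ _)⟩
      exact hδ' j (Nat.lt_of_succ_lt_succ hk) _ hτx

lemma iter_hasDeriv (T : PCT) (i₀ : ℕ) (hi₀ : T.a i₀ = 0) {δ : ℝ} (n : ℕ)
    (hδ : ∀ k < n, ∀ x ∈ Set.Ioo (0:ℝ) δ, T.τ^[k] x ∈ Set.Ioo 0 (T.b i₀)) :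
    ∀ m ≤ n, ∀ x ∈ Set.Ioo (0:ℝ) δ,
      HasDerivAt (T.τ^[m]) (∏ k ∈ Finset.range m, deriv T.τ (T.τ^[k] x)) x := by
  intro m
  induction m with
  | zero => intro _ x _; simpa using hasDerivAt_id x
  | succ m ih =>
    intro hm x hx
    have hmem : T.τ^[m] x ∈ Set.Ioo (T.a i₀) (T.b i₀) := by
      rw [hi₀]; exact hδ m (lt_of_lt_of_le (Nat.lt_succ_self m) hm) x hx
    have hd : HasDerivAt T.τ (deriv T.τ (T.τ^[m] x)) (T.τ^[m] x) :=
      (T.diff i₀ _ hmem).hasDerivAt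
    have hcomp := hd.comp x (ih (le_trans (Nat.le_succ m) hm) x hx)
    rw [Function.iterate_succ', Finset.prod_range_succ, mul_comm]
    exact hcomp

lemma iter_tendsto (T : PCT) (i₀ : ℕ) (hi₀ : T.a i₀ = 0) {δ : ℝ} (hδ0 : 0 < δ) (n : ℕ)
    (hδ : ∀ k < n, ∀ x ∈ Set.Ioo (0:ℝ) δ, T.τ^[k] x ∈ Set.Ioo 0 (T.b i₀)) :
    ∀ k < n, Filter.Tendsto (T.τ^[k]) (nhdsWithin 0 (Set.Ioi 0)) (nhdsWithin 0 (Set.Ioi 0)) := by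
  have hlim : Filter.Tendsto T.τ (nhdsWithin 0 (Set.Ioi 0)) (nhds 0) := by
    have := T.lim_zero i₀; rwa [hi₀] at this
  intro k
  induction k with
  | zero =>
    intro _; simpa using tendsto_id
  | succ k ih =>
    intro hk
    have ihk := ih (Nat.lt_of_succ_lt hk)
    rw [tendsto_nhdsWithin_iff]
    constructor
    · rw [Function.iterate_succ']
      exact hlim.comp ihk
    · filter_upwards [Ioo_mem_nhdsGT_of_mem ⟨le_refl (0:ℝ), hδ0⟩] with x hx
      exact (hδ (k+1) hk x hx).1

lemma branchSeq_union (T : PCT) (n : ℕ) {c d δ : ℝ} (hc : 0 < c) (hcδ : c < δ)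
    (h1 : IsBranchSeq T n c d) (h2 : IsBranchSeq T n 0 δ) :
    IsBranchSeq T n 0 (max d δ) := by
  obtain ⟨hcd, hb1⟩ := h1
  obtain ⟨hδ0, hb2⟩ := h2
  refine ⟨lt_of_lt_of_le (lt_trans hc hcd) (le_max_left _ _), ?_⟩
  intro k hk
  obtain ⟨i, hi⟩ := hb1 k hk
  obtain ⟨j, hj⟩ := hb2 k hk
  have hmin : c < min d δ := lt_min hcd hcδ
  have htc : c < (c + min d δ) / 2 := by linarith
  have htmin : (c + min d δ) / 2 < min d δ := by linarith
  have htd : (c + min d δ) / 2 < d := lt_of_lt_of_le htmin (min_le_left _ _)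
  have htδ : (c + min d δ) / 2 < δ := lt_of_lt_of_le htmin (min_le_right _ _)
  have hij : i = j := by
    by_contra hne
    have h1' : T.τ^[k] ((c + min d δ) / 2) ∈ Set.Ioo (T.a i) (T.b i) :=
      hi ⟨_, ⟨htc, htd⟩, rfl⟩
    have h2' : T.τ^[k] ((c + min d δ) / 2) ∈ Set.Ioo (T.a j) (T.b j) :=
      hj ⟨_, ⟨lt_trans hc htc, htδ⟩, rfl⟩
    exact (T.disj hne).ne_of_mem h1' h2' rfl
  refine ⟨i, ?_⟩
  rintro y ⟨x, hx, rfl⟩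
  rcases lt_or_ge x δ with h | h
  · rw [hij]; exact hj ⟨x, ⟨hx.1, h⟩, rfl⟩
  · have hxd : x < d := by
      rcases le_total d δ with hle | hle
      · exact absurd hx.2 (by rw [max_eq_right hle]; exact not_lt.mpr h)
      · rw [max_eq_left hle] at hx; exact hx.2
    exact hi ⟨x, ⟨lt_of_lt_of_le hcδ h, hxd⟩, rfl⟩

/-- Proposition 2.1.7 (f). Let `τ ∈ 𝒯` and suppose `0` is not a limit
point of the left partition endpoints `{aᵢ}`, with `τ'(0) = 1/α > 1` (the right limit at
the branch starting at `0`). Then for every `n ≥ 1`, `0` is not a limit point of the left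
endpoints of the partition `𝒫⁽ⁿ⁾` of `τⁿ`, and `(τⁿ)'(0) = 1/αⁿ > 1` (as a right limit
at `0`). -/
theorem iterate_expand_at_zero (T : PCT)
    (hna : ¬ AccPt (0:ℝ) (Filter.principal (Set.range T.a)))
    (α : ℝ) (hα0 : 0 < α) (hα1 : α < 1)
    (i₀ : ℕ) (hi₀ : T.a i₀ = 0) (hdi₀ : T.da i₀ = 1 / α)
    (n : ℕ) (hn : 1 ≤ n) :
    (¬ AccPt (0:ℝ) (Filter.principal {c : ℝ | ∃ d, IsBranchInterval T n c d})) ∧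
    Filter.Tendsto (deriv (T.τ^[n])) (nhdsWithin 0 (Set.Ioi (0:ℝ)))
      (nhds (1 / α ^ n)) ∧ 1 < 1 / α ^ n := by
  have hb0 : (0:ℝ) < T.b i₀ := hi₀ ▸ T.lt i₀
  obtain ⟨δ, hδ0, hδb, hδ⟩ := exists_delta T i₀ hi₀ n
  have hα1n : 1 < 1 / α ^ n := by
    rw [lt_div_iff₀ (pow_pos hα0 n), one_mul]
    exact pow_lt_one₀ hα0.le hα1 (by omega)
  have hBS0 : IsBranchSeq T n 0 δ := by
    refine ⟨hδ0, fun k hk => ⟨i₀, ?_⟩⟩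
    rintro z ⟨x, hx, rfl⟩
    rw [hi₀]
    exact hδ k hk x hx
  refine ⟨?_, ?_, hα1n⟩
  · intro hacc
    obtain ⟨y, ⟨hyU, hyC⟩, hy0⟩ := (accPt_iff_nhds (x := (0:ℝ))).mp hacc
      (Set.Ioo (-δ) δ) (Ioo_mem_nhds (by linarith) hδ0)
    obtain ⟨d, hBI⟩ := hyC
    rcases lt_trichotomy y 0 with hy | hy | hy
    · -- negative left endpoint: impossible, branch intervals sit in [0,1]
      obtain ⟨hyd, hb⟩ := hBI.1
      obtain ⟨i, hi⟩ := hb 0 hn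
      have hmin : 0 < min (d - y) (-y) := lt_min (by linarith) (by linarith)
      have hml := min_le_left (d - y) (-y)
      have hmr := min_le_right (d - y) (-y)
      obtain ⟨t, htmem, htneg⟩ : ∃ t, t ∈ Set.Ioo y d ∧ t < 0 :=
        ⟨y + min (d - y) (-y) / 2, ⟨by linarith, by linarith⟩, by linarith⟩
      have : T.τ^[0] t ∈ Set.Ioo (T.a i) (T.b i) := hi ⟨t, htmem, rfl⟩
      rw [Function.iterate_zero_apply] at this
      have := (T.sub i this).1
      linarith
    · exact hy0 hy
    · -- positive left endpoint close to 0: extend to 0, contradict maximality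
      have hyδ : y < δ := hyU.2
      have hun := branchSeq_union T n hy hyδ hBI.1 hBS0
      have := (hBI.2 0 (max d δ) hy.le (le_max_left _ _) hun).1
      exact hy0 this.symm
  · have hdτ : Filter.Tendsto (deriv T.τ) (nhdsWithin 0 (Set.Ioi 0)) (nhds (1 / α)) := by
      have := T.deriv_lim i₀; rwa [hi₀, hdi₀] at this
    have hit := iter_tendsto T i₀ hi₀ hδ0 n hδ
    have hprodlim : Filter.Tendsto (fun x => ∏ k ∈ Finset.range n, deriv T.τ (T.τ^[k] x))
        (nhdsWithin 0 (Set.Ioi 0)) (nhds (∏ _k ∈ Finset.range n, (1 / α))) := by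
      refine tendsto_finset_prod _ (fun k hk => ?_)
      exact hdτ.comp (hit k (Finset.mem_range.mp hk))
    rw [Finset.prod_const, Finset.card_range, one_div_pow] at hprodlim
    refine hprodlim.congr' ?_
    filter_upwards [Ioo_mem_nhdsGT_of_mem ⟨le_refl (0:ℝ), hδ0⟩] with x hx
    exact ((iter_hasDeriv T i₀ hi₀ n hδ n le_rfl x hx).deriv).symm
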